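/- arXiv:1011.3648 — 6 statements merged into one kernel-verified Lean document; each statement's English description precedes it below -/
import Mathlib

section
/- Let q = 2^e with e ≥ 2 and let F_q be the finite field with q elements. The partial derivative with respect to x of the polynomial h(x,z) := z·∏_{α∈F_q}(x + α + α²z) ∈ F_q[x,z] is the polynomial z^q + z; that is, h_x(x,z) = z^q + z identically in F_q[x,z]. -/
open Polynomial Finset

private lemma derivative_finset_prod_aux {R : Type*} [CommSemiring R] {ι : Type*} [DecidableEq ι]
    (s : Finset ι) (f : ι → R[X]) :
    derivative (∏ i ∈ s, f i) = ∑ i ∈ s, (∏ j ∈ s.erase i, f j) * derivative (f i) := by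
  induction s using Finset.induction_on with
  | empty => simp
  | @insert a s ha ih =>
    rw [Finset.prod_insert ha, derivative_mul, ih, Finset.sum_insert ha,
      Finset.erase_insert ha, Finset.mul_sum]
    rw [mul_comm (derivative (f a))]
    congr 1
    refine Finset.sum_congr rfl fun i hi => ?_
    rw [Finset.erase_insert_of_ne (ne_of_mem_of_not_mem hi ha).symm,
      Finset.prod_insert (fun h => ha (Finset.mem_of_mem_erase h)), mul_assoc]

private lemma prod_X_add_C_erase_zero {F : Type*} [Field F] [Fintype F] [DecidableEq F]
    [CharP F 2] :
    ∏ δ ∈ (univ : Finset F).erase 0, (X + Polynomial.C δ) =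
      X ^ (Fintype.card F - 1) + 1 := by
  have hq1 : 1 < Fintype.card F := Fintype.one_lt_card
  have hchar : CharP F[X] 2 := charP_of_injective_ringHom (Polynomial.C_injective (R := F)) 2
  have hmonic : (X ^ Fintype.card F - X : F[X]).Monic :=
    monic_X_pow_sub (by rw [degree_X]; exact_mod_cast hq1)
  have hcard : (X ^ Fintype.card F - X : F[X]).roots.card =
      (X ^ Fintype.card F - X : F[X]).natDegree := by
    rw [FiniteField.roots_X_pow_card_sub_X, FiniteField.X_pow_card_sub_X_natDegree_eq F hq1]
    exact Finset.card_univ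
  have hfull : ∏ a : F, (X - Polynomial.C a) = X ^ Fintype.card F - X := by
    have := prod_multiset_X_sub_C_of_monic_of_roots_card_eq hmonic hcard
    rw [FiniteField.roots_X_pow_card_sub_X] at this
    rw [← this, Finset.prod_eq_multiset_prod]
  have hfull' : ∏ a : F, (X + Polynomial.C a) = X ^ Fintype.card F + X := by
    simpa [CharTwo.sub_eq_add] using hfull
  have hsplit : (X + Polynomial.C (0 : F)) * ∏ δ ∈ (univ : Finset F).erase 0, (X + Polynomial.C δ)
      = ∏ a : F, (X + Polynomial.C a) :=
    Finset.mul_prod_erase (univ : Finset F) (fun a => X + Polynomial.C a) (Finset.mem_univ 0)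
  have hX : (X : F[X]) ≠ 0 := X_ne_zero
  apply mul_left_cancel₀ hX
  rw [map_zero, add_zero] at hsplit
  have hq : Fintype.card F - 1 + 1 = Fintype.card F := Nat.succ_pred_eq_of_pos (by positivity)
  rw [hsplit, hfull', mul_add, mul_one, ← pow_succ', hq]

private lemma prod_phi_erase_zero {F : Type*} [Field F] [Fintype F] [DecidableEq F]
    [CharP F 2] :
    ∏ δ ∈ (univ : Finset F).erase 0, (Polynomial.C δ + Polynomial.C (δ ^ 2) * X) =
      X ^ (Fintype.card F - 1) + 1 := by
  have h1 : ∀ δ ∈ (univ : Finset F).erase 0,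
      Polynomial.C δ + Polynomial.C (δ ^ 2) * X
        = Polynomial.C δ * (1 + Polynomial.C δ * X) := by
    intro δ _
    rw [mul_add, mul_one, ← mul_assoc, ← C_mul, ← sq]
  rw [Finset.prod_congr rfl h1, Finset.prod_mul_distrib]
  have h2 : ∏ δ ∈ (univ : Finset F).erase 0, (1 + Polynomial.C δ * X)
      = ∏ δ ∈ (univ : Finset F).erase 0, (Polynomial.C δ⁻¹ * (X + Polynomial.C δ)) := by
    refine Finset.prod_bij' (fun δ _ => δ⁻¹) (fun δ _ => δ⁻¹) ?_ ?_ ?_ ?_ ?_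
    · intro a ha
      simp only [Finset.mem_erase, Finset.mem_univ, and_true] at ha ⊢
      exact inv_ne_zero ha
    · intro a ha
      simp only [Finset.mem_erase, Finset.mem_univ, and_true] at ha ⊢
      exact inv_ne_zero ha
    · intro a _; exact inv_inv a
    · intro a _; exact inv_inv a
    · intro a ha
      simp only [Finset.mem_erase, Finset.mem_univ, and_true] at ha
      rw [inv_inv, mul_add, ← C_mul, mul_inv_cancel₀ ha, C_1, add_comm]
  rw [h2, Finset.prod_mul_distrib, ← mul_assoc, ← Finset.prod_mul_distrib]
  have h3 : ∀ δ ∈ (univ : Finset F).erase 0,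
      Polynomial.C δ * Polynomial.C δ⁻¹ = (1 : F[X]) := by
    intro δ hδ
    simp only [Finset.mem_erase, Finset.mem_univ, and_true] at hδ
    rw [← C_mul, mul_inv_cancel₀ hδ, C_1]
  rw [Finset.prod_congr rfl h3, Finset.prod_const_one, one_mul, prod_X_add_C_erase_zero]

/-- For `q = 2^e`, the partial derivative with respect to `x` of the polynomial
`h(x,z) = z·∏_{α ∈ F_q} (x + α + α²z)`, viewed as a polynomial in `x` over
`F_q[z]`, equals `z^q + z`. -/
theorem h_deriv_x_eq (e : ℕ) (he : 2 ≤ e)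
    (F : Type*) [Field F] [Fintype F] (hF : Fintype.card F = 2 ^ e)
    (h : Polynomial (Polynomial F))
    (hdef : h = C X *
      ∏ α : F, (X + C (Polynomial.C α + Polynomial.C (α ^ 2) * X))) :
    derivative h = C (X ^ (2 ^ e) + X) := by
  classical
  have hq1 : 1 < Fintype.card F := Fintype.one_lt_card
  have hchar2 : ringChar F = 2 := by
    rw [FiniteField.even_card_iff_char_two, hF]
    have h2 : 2 ∣ 2 ^ e := dvd_pow_self 2 (by omega)
    omega
  haveI : CharP F 2 := hchar2 ▸ ringChar.charP F
  haveI : CharP (Polynomial F) 2 :=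
    charP_of_injective_ringHom (Polynomial.C_injective (R := F)) 2
  set q := Fintype.card F with hq
  set φ : F → Polynomial F := fun α => Polynomial.C α + Polynomial.C (α ^ 2) * X with hφ
  have hφinj : Function.Injective φ := by
    intro a b hab
    have := congrArg (fun p => Polynomial.coeff p 0) hab
    simpa [hφ, Polynomial.coeff_C] using this
  have hφadd : ∀ a b : F, φ (a + b) = φ a + φ b := by
    intro a b
    simp only [hφ, CharTwo.add_sq, map_add, add_mul]
    ring
  set P : Polynomial (Polynomial F) := ∏ α : F, (X + C (φ α)) with hP
  have hD : derivative P = ∑ α : F, ∏ β ∈ (univ : Finset F).erase α, (X + C (φ β)) := by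
    rw [hP, derivative_finset_prod_aux]
    simp
  have heval : ∀ α : F, (derivative P).eval (φ α) = X ^ (q - 1) + 1 := by
    intro α
    rw [hD, eval_finset_sum]
    rw [Finset.sum_eq_single α]
    · rw [eval_prod]
      simp only [eval_add, eval_X, eval_C]
      have hc : ∀ β ∈ (univ : Finset F).erase α, φ α + φ β = φ (α + β) :=
        fun β _ => (hφadd α β).symm
      rw [Finset.prod_congr rfl hc]
      have hre : ∏ β ∈ (univ : Finset F).erase α, φ (α + β)
          = ∏ δ ∈ (univ : Finset F).erase 0, φ δ := by
        refine Finset.prod_bij' (fun β _ => α + β) (fun δ _ => α + δ) ?_ ?_ ?_ ?_ ?_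
        · intro β hβ
          simp only [Finset.mem_erase, Finset.mem_univ, and_true] at hβ ⊢
          intro h0
          exact hβ (by have := neg_eq_of_add_eq_zero_right h0
                       rw [CharTwo.neg_eq] at this; exact this.symm)
        · intro δ hδ
          simp only [Finset.mem_erase, Finset.mem_univ, and_true] at hδ ⊢
          intro h0
          exact hδ (by have : α + δ = α + 0 := by rw [h0, add_zero]
                       exact add_left_cancel this)
        · intro β _
          show α + (α + β) = β
          rw [← add_assoc, CharTwo.add_self_eq_zero, zero_add]
        · intro δ _
          show α + (α + δ) = δ
          rw [← add_assoc, CharTwo.add_self_eq_zero, zero_add]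
        · intro β _; rfl
      rw [hre]
      exact prod_phi_erase_zero
    · intro β _ hβ
      rw [eval_prod]
      refine Finset.prod_eq_zero (Finset.mem_erase.2 ⟨hβ.symm, Finset.mem_univ α⟩) ?_
      simp [CharTwo.add_self_eq_zero]
    · simp
  have hPdeg : P.natDegree ≤ q := by
    refine (natDegree_prod_le _ _).trans ?_
    simp [natDegree_X_add_C, hq]
  have hDdeg : (derivative P).natDegree < q := by
    calc (derivative P).natDegree ≤ P.natDegree - 1 := natDegree_derivative_le P
    _ ≤ q - 1 := Nat.sub_le_sub_right hPdeg 1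
    _ < q := Nat.sub_lt (by omega) one_pos
  have hQ : derivative P - C (X ^ (q - 1) + 1) = 0 := by
    refine eq_zero_of_natDegree_lt_card_of_eval_eq_zero _ hφinj (fun α => ?_) ?_
    · rw [eval_sub, eval_C, heval α, sub_self]
    · refine lt_of_le_of_lt (natDegree_sub_le _ _) ?_
      rw [natDegree_C]
      simpa using hDdeg
  have hDP : derivative P = C (X ^ (q - 1) + 1) := by
    rwa [sub_eq_zero] at hQ
  rw [hdef, derivative_C_mul, hDP, ← C_mul, mul_add, mul_one, ← pow_succ',
    Nat.sub_add_cancel (le_of_lt hq1), hF]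
end

section
/- Let q = 2^e with e ≥ 2, let F_q be the finite field with q elements, fix z₀ ∈ F_q with z₀ ≠ 0, and set h₀(x) := Σ_{i=0}^{e-1} z₀^{2^i} x^{2^i} ∈ F_q[x]. Then z₀·∏_{α∈F_q}(x + α + α²z₀) = h₀(x)² as polynomials in F_q[x]; in particular every element of S₀ = {α + α²z₀ : α ∈ F_q} is a root of the separable polynomial h₀, which has degree q/2. -/
open Polynomial

/-- For `q = 2^e` and a fixed nonzero `z₀ ∈ F_q`, setting
`h₀(x) = Σ_{i=0}^{e-1} z₀^(2^i)·x^(2^i)`, one has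
`z₀·∏_{α ∈ F_q}(x + α + α²z₀) = h₀(x)²`; in particular every element of
`S₀ = {α + α²z₀ : α ∈ F_q}` is a root of the separable polynomial `h₀`,
which has degree `q/2 = 2^(e-1)`. -/
theorem prod_eq_h₀_sq (e : ℕ) (he : 2 ≤ e)
    (F : Type*) [Field F] [Fintype F] (hF : Fintype.card F = 2 ^ e)
    (z₀ : F) (hz₀ : z₀ ≠ 0)
    (h₀ : Polynomial F)
    (hdef : h₀ = ∑ i ∈ Finset.range e, C (z₀ ^ 2 ^ i) * X ^ 2 ^ i) :
    C z₀ * ∏ α : F, (X + C (α + α ^ 2 * z₀)) = h₀ ^ 2 ∧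
      (∀ α : F, h₀.eval (α + α ^ 2 * z₀) = 0) ∧
      h₀.Separable ∧ h₀.natDegree = 2 ^ (e - 1) := by
  classical
  -- characteristic 2
  have h2F : (2 : F) = 0 := by
    have hc := FiniteField.cast_card_eq_zero F
    rw [hF] at hc
    push_cast at hc
    exact pow_eq_zero_iff (by omega) |>.mp hc
  have hring : ringChar F = 2 := CharP.ringChar_of_prime_eq_zero Nat.prime_two h2F
  haveI : CharP F 2 := hring ▸ ringChar.charP F
  have hzq : z₀ ^ 2 ^ e = z₀ := by rw [← hF]; exact FiniteField.pow_card z₀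
  -- the auxiliary polynomial g = X + z₀ X²
  set g : F[X] := X + C z₀ * X ^ 2 with hg
  -- Step A : h₀.comp g = C z₀ * (X^(2^e) - X)
  have f : ℕ → F[X] := fun j => C (z₀ ^ 2 ^ j) * X ^ 2 ^ j
  have hcomp : h₀.comp g = C z₀ * (X ^ 2 ^ e - X) := by
    have hterm : ∀ i : ℕ,
        (C (z₀ ^ 2 ^ i) * X ^ 2 ^ i).comp g
          = (C (z₀ ^ 2 ^ (i + 1)) * X ^ 2 ^ (i + 1)) - C (z₀ ^ 2 ^ i) * X ^ 2 ^ i := by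
      intro i
      have hpow : g ^ 2 ^ i = X ^ 2 ^ i + C (z₀ ^ 2 ^ i) * X ^ 2 ^ (i + 1) := by
        rw [hg, add_pow_char_pow, mul_pow, ← C_pow, ← pow_mul, ← pow_succ']
      have hz : z₀ ^ 2 ^ (i + 1) = z₀ ^ 2 ^ i * z₀ ^ 2 ^ i := by
        rw [← pow_add]; congr 1; omega
      rw [mul_comp, C_comp, X_pow_comp, hpow, CharTwo.sub_eq_add, hz, C_mul]
      ring
    calc h₀.comp g = ∑ i ∈ Finset.range e, (C (z₀ ^ 2 ^ i) * X ^ 2 ^ i).comp g := by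
          rw [hdef, sum_comp]
      _ = ∑ i ∈ Finset.range e,
            ((fun j => C (z₀ ^ 2 ^ j) * X ^ 2 ^ j) (i + 1)
              - (fun j => C (z₀ ^ 2 ^ j) * X ^ 2 ^ j) i) := by
          exact Finset.sum_congr rfl fun i _ => hterm i
      _ = C (z₀ ^ 2 ^ e) * X ^ 2 ^ e - C (z₀ ^ 2 ^ 0) * X ^ 2 ^ 0 := by
          rw [Finset.sum_range_sub (fun j => C (z₀ ^ 2 ^ j) * X ^ 2 ^ j)]
      _ = C z₀ * (X ^ 2 ^ e - X) := by
          simp [hzq, mul_sub]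
  have h1lt : 1 < 2 ^ e := Nat.one_lt_two_pow_iff.mpr (by omega)
  -- Step B : ∏ α, (X - C α) = X^(2^e) - X
  have hXq : (∏ α : F, (X - C α)) = X ^ 2 ^ e - X := by
    have hmonic : (X ^ 2 ^ e - X : F[X]).Monic :=
      monic_X_pow_sub (by rw [degree_X]; exact_mod_cast h1lt)
    have hroots : (X ^ 2 ^ e - X : F[X]).roots = Finset.univ.val := by
      rw [← hF]; exact FiniteField.roots_X_pow_card_sub_X F
    have hcard : Multiset.card (X ^ 2 ^ e - X : F[X]).roots
        = (X ^ 2 ^ e - X : F[X]).natDegree := by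
      rw [hroots, FiniteField.X_pow_card_sub_X_natDegree_eq F h1lt]
      simpa using hF
    have := prod_multiset_X_sub_C_of_monic_of_roots_card_eq hmonic hcard
    rw [hroots] at this
    rw [Finset.prod_eq_multiset_prod]
    exact this
  -- Step C : factor g + C (α + α²z₀)
  have hfac : ∀ α : F, g + C (α + α ^ 2 * z₀)
      = C z₀ * ((X - C α) * (X - C (α + z₀⁻¹))) := by
    intro α
    have hu : (C z₀ : F[X]) * C z₀⁻¹ = 1 := by
      rw [← C_mul, mul_inv_cancel₀ hz₀, C_1]
    have h2 : (2 : F[X]) = 0 := by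
      have : ((2 : ℕ) : F[X]) = 0 := CharP.cast_eq_zero F[X] 2
      exact_mod_cast this
    rw [hg]
    simp only [C_add, C_mul, C_pow]
    linear_combination (X - C α) * hu + (X + C z₀ * C α * X) * h2
  -- the comp of the product
  have hprodcomp : (∏ α : F, (X + C (α + α ^ 2 * z₀))).comp g
      = C z₀ ^ 2 ^ e * (X ^ 2 ^ e - X) ^ 2 := by
    have : (∏ α : F, (X + C (α + α ^ 2 * z₀))).comp g
        = ∏ α : F, (C z₀ * ((X - C α) * (X - C (α + z₀⁻¹)))) := by
      rw [prod_comp]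
      refine Finset.prod_congr rfl fun α _ => ?_
      rw [add_comp, X_comp, C_comp, hfac α]
    rw [this, Finset.prod_mul_distrib, Finset.prod_const, Finset.prod_mul_distrib, hXq,
      Finset.card_univ, hF]
    have hre : (∏ α : F, (X - C (α + z₀⁻¹))) = ∏ β : F, (X - C β) :=
      Fintype.prod_equiv (Equiv.addRight z₀⁻¹) _ _ (fun α => rfl)
    rw [hre, hXq]
    ring
  -- main identity
  have hCzq : (C z₀ : F[X]) ^ 2 ^ e = C z₀ := by rw [← C_pow, hzq]
  have main : C z₀ * ∏ α : F, (X + C (α + α ^ 2 * z₀)) = h₀ ^ 2 := by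
    have hzero : ((C z₀ * ∏ α : F, (X + C (α + α ^ 2 * z₀))) - h₀ ^ 2).comp g = 0 := by
      rw [sub_comp, mul_comp, C_comp, pow_comp, hprodcomp, hcomp, hCzq]
      ring
    rcases comp_eq_zero_iff.mp hzero with h | ⟨_, hgc⟩
    · exact sub_eq_zero.mp h
    · exfalso
      have : g.coeff 2 = (C (g.coeff 0)).coeff 2 := by rw [← hgc]
      rw [coeff_C] at this
      simp [hg, coeff_X, coeff_C_mul, coeff_X_pow, coeff_C] at this
      exact hz₀ this
  refine ⟨main, ?_, ?_, ?_⟩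
  · -- every element of S₀ is a root
    intro α
    have := congrArg (fun p : F[X] => p.eval (α + α ^ 2 * z₀)) main
    simp only [eval_mul, eval_C, eval_prod, eval_add, eval_X, eval_pow] at this
    have hterm : ∀ β : F, β = α →
        (α + α ^ 2 * z₀) + (β + β ^ 2 * z₀) = 0 := by
      rintro β rfl; exact CharTwo.add_self_eq_zero _
    have hp0 : (∏ β : F, ((α + α ^ 2 * z₀) + (β + β ^ 2 * z₀))) = 0 :=
      Finset.prod_eq_zero (Finset.mem_univ α) (hterm α rfl)
    rw [hp0, mul_zero] at this
    exact pow_eq_zero_iff (n := 2) (by omega) |>.mp this.symm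
  · -- separability
    have hderiv : derivative h₀ = C z₀ := by
      rw [hdef, derivative_sum]
      rw [Finset.sum_eq_single 0]
      · simp
      · intro i _ hi
        have h2i : ((2 ^ i : ℕ) : F) = 0 := by
          have : (2 : F) ^ i = 0 := by
            rw [h2F, zero_pow hi]
          exact_mod_cast this
        rw [derivative_C_mul, derivative_X_pow, h2i]
        simp
      · intro h; exact absurd (Finset.mem_range.mpr (by omega)) h
    rw [Polynomial.Separable, hderiv]
    exact ⟨0, C z₀⁻¹, by rw [← C_mul, inv_mul_cancel₀ hz₀, C_1]; ring⟩
  · -- degree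
    have hdeg : (C z₀ * ∏ α : F, (X + C (α + α ^ 2 * z₀))).natDegree = 2 ^ e := by
      have hprodmonic : (∏ α : F, (X + C (α + α ^ 2 * z₀))).Monic :=
        monic_prod_of_monic _ _ fun α _ => monic_X_add_C _
      rw [natDegree_C_mul hz₀, natDegree_prod_of_monic _ _ fun α _ => monic_X_add_C _]
      simp only [natDegree_X_add_C, Finset.sum_const, smul_eq_mul, mul_one,
        Finset.card_univ, hF]
    rw [main, natDegree_pow] at hdeg
    have h2e : 2 ^ e = 2 * 2 ^ (e - 1) := by
      rw [← pow_succ']; congr 1; omega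
    omega
end

section
/- Let q = 2^e with e ≥ 2 and let F_q be the finite field with q elements. For h(x,z) := z·∏_{α∈F_q}(x + α + α²z), the set of values of h on F_q × F_q is exactly {0, 1}; that is, {h(x,z) : x, z ∈ F_q} = {0, 1}. -/
open Polynomial Finset

section Key

variable {F : Type*} [Field F] [Fintype F] [CharP F 2]

/-- product of `(s - α)` over all `α` in the image of a finite field. -/
lemma prod_s_sub (K : Type*) [Field K] (f : F →+* K) (s : K) :
    ∏ α : F, (s - f α) = s ^ (Fintype.card F) - s := by
  classical
  set q := Fintype.card F
  have hne : (X ^ q - X : F[X]) ≠ 0 :=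
    FiniteField.X_pow_card_sub_X_ne_zero F Fintype.one_lt_card
  have hroots := FiniteField.roots_X_pow_card_sub_X F
  have hmonic : (X ^ q - X : F[X]).Monic := by
    apply monic_X_pow_sub
    simpa using Fintype.one_lt_card (α := F)
  have hcard : Multiset.card (X ^ q - X : F[X]).roots = (X ^ q - X : F[X]).natDegree := by
    rw [hroots, FiniteField.X_pow_card_sub_X_natDegree_eq F Fintype.one_lt_card]
    simp [q]
  have hfact := C_leadingCoeff_mul_prod_multiset_X_sub_C hcard
  rw [hmonic.leadingCoeff, map_one, one_mul, hroots] at hfact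
  have := congrArg (fun p : F[X] => Polynomial.eval s (Polynomial.map f p)) hfact
  simp only [Polynomial.map_multiset_prod, Multiset.map_map, Function.comp,
    Polynomial.map_sub, Polynomial.map_pow, Polynomial.map_X, Polynomial.map_C,
    Polynomial.eval_multiset_prod, eval_sub, eval_pow, eval_X, eval_C] at this
  rw [← this]
  rw [Finset.prod_eq_multiset_prod]

lemma key (z x : F) (hz : z ≠ 0) (hx : ∀ α : F, x + α + α ^ 2 * z ≠ 0) :
    z * ∏ α : F, (x + α + α ^ 2 * z) = 1 := by
  classical
  set K := AlgebraicClosure F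
  haveI : CharP K 2 := charP_of_injective_algebraMap (algebraMap F K).injective 2
  set f : F →+* K := algebraMap F K with hf
  have hinj : Function.Injective f := f.injective
  set q := Fintype.card F with hq
  set b : F := z⁻¹ with hb
  set c : F := x * z⁻¹ with hc
  have hzb : z * b = 1 := mul_inv_cancel₀ hz
  have hzc : z * c = x := by rw [hc, mul_comm x, ← mul_assoc, mul_inv_cancel₀ hz, one_mul]
  have htwo : (2 : K) = 0 := by exact_mod_cast CharP.cast_eq_zero K 2
  -- a root of the quadratic in the algebraic closure
  obtain ⟨r, hr⟩ : ∃ r : K, r ^ 2 + f b * r + f c = 0 := by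
    have hdeg : (X ^ 2 + C (f b) * X + C (f c) : K[X]).degree = 2 := by
      compute_degree!
    obtain ⟨r, hr⟩ := IsAlgClosed.exists_root (X ^ 2 + C (f b) * X + C (f c) : K[X])
      (by rw [hdeg]; norm_num)
    exact ⟨r, by simpa [IsRoot] using hr⟩
  -- pointwise factorization
  have point : ∀ α : F, f (x + α + α ^ 2 * z) = f z * ((f α + r) * (f α + r + f b)) := by
    intro α
    have h1 : f z * f b = 1 := by rw [← map_mul, hzb, map_one]
    have h2 : f z * f c = f x := by rw [← map_mul, hzc]
    simp only [map_add, map_mul, map_pow]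
    linear_combination (-(f z)) * hr - f α * h1 + h2 + (f x - f z * f α * r) * htwo
  -- Frobenius: r^q is also a root
  have hbq : (f b) ^ q = f b := by rw [← map_pow, FiniteField.pow_card]
  have hcq : (f c) ^ q = f c := by rw [← map_pow, FiniteField.pow_card]
  obtain ⟨e', he'⟩ : ∃ n : ℕ, q = 2 ^ n := by
    obtain ⟨n, hn⟩ := FiniteField.card F 2
    exact ⟨n, by rw [hq, hn.2]⟩
  have hrq : (r ^ q) ^ 2 + f b * (r ^ q) + f c = 0 := by
    have := congrArg (fun t => t ^ q) hr
    simp only [zero_pow (by positivity : q ≠ 0)] at this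
    have hhom : ∀ u v : K, (u + v) ^ q = u ^ q + v ^ q := by
      intro u v
      rw [he']
      exact add_pow_char_pow u v 2 e'
    rw [hhom, hhom] at this
    rw [mul_pow, hbq, hcq, ← pow_mul, mul_comm 2 q, pow_mul] at this
    exact this
  have hfactor : (r ^ q + r) * (r ^ q + r + f b) = 0 := by
    linear_combination hrq + hr + (r ^ q * r - f c) * htwo
  have hru : r ^ q + r = f b := by
    rcases mul_eq_zero.mp hfactor with h | h
    · -- then r is in F, contradiction
      exfalso
      have hsub : r ^ q - r = 0 := by linear_combination h - r * htwo
      have hprod : ∏ α : F, (r - f α) = 0 := by rw [prod_s_sub K f r, hsub]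
      obtain ⟨α, -, hα⟩ := Finset.prod_eq_zero_iff.mp hprod
      have hrf : r = f α := by linear_combination hα
      have h0 : f α + r = 0 := by rw [hrf]; linear_combination f α * htwo
      have hzero : f (x + α + α ^ 2 * z) = 0 := by
        rw [point α, h0, zero_mul, mul_zero]
      exact hx α (hinj (hzero.trans (map_zero f).symm))
    · linear_combination h - htwo * f b
  -- products
  have hprod1 : ∏ α : F, (f α + r) = f b := by
    have : ∏ α : F, (r - f α) = r ^ q - r := prod_s_sub K f r
    calc ∏ α : F, (f α + r) = ∏ α : F, (r - f α) := by
          apply Finset.prod_congr rfl; intro α _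
          rw [CharTwo.sub_eq_add, add_comm]
      _ = r ^ q - r := this
      _ = f b := by rw [CharTwo.sub_eq_add, hru]
  have hprod2 : ∏ α : F, (f α + r + f b) = f b := by
    have h2 : ∏ α : F, ((r + f b) - f α) = (r + f b) ^ q - (r + f b) :=
      prod_s_sub K f (r + f b)
    have hpow : (r + f b) ^ q = r ^ q + f b := by
      have : (r + f b) ^ q = r ^ q + (f b) ^ q := by
        rw [he']; exact add_pow_char_pow r (f b) 2 e'
      rw [this, hbq]
    calc ∏ α : F, (f α + r + f b) = ∏ α : F, ((r + f b) - f α) := by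
          apply Finset.prod_congr rfl; intro α _
          rw [CharTwo.sub_eq_add]; ring
      _ = (r + f b) ^ q - (r + f b) := h2
      _ = f b := by
          rw [hpow, CharTwo.sub_eq_add]
          linear_combination hru + f b * htwo
  -- combine
  apply hinj
  rw [map_mul, map_one, map_prod]
  calc f z * ∏ α : F, f (x + α + α ^ 2 * z)
      = f z * ∏ α : F, (f z * ((f α + r) * (f α + r + f b))) := by
        rw [Finset.prod_congr rfl fun α _ => point α]
    _ = f z * ((f z) ^ q * ((∏ α : F, (f α + r)) * ∏ α : F, (f α + r + f b))) := by
        rw [Finset.prod_mul_distrib, Finset.prod_const, Finset.prod_mul_distrib]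
        simp [hq]
    _ = 1 := by
        rw [hprod1, hprod2, ← map_pow, FiniteField.pow_card, ← map_mul, ← map_mul, ← map_mul]
        rw [show z * (z * (b * b)) = (z * b) * (z * b) by ring, hzb, one_mul, map_one]

end Key

/-- For `q = 2^e`, the set of values of `h(x,z) = z·∏_{α ∈ F_q}(x + α + α²z)`
on `F_q × F_q` is exactly `{0, 1}`. -/
theorem h_values_eq_zero_one (e : ℕ) (he : 2 ≤ e)
    (F : Type*) [Field F] [Fintype F] (hF : Fintype.card F = 2 ^ e) :
    {w : F | ∃ x z : F, w = z * ∏ α : F, (x + α + α ^ 2 * z)} = {0, 1} := by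
  classical
  haveI : CharP F 2 := by
    have hchar : CharP F (ringChar F) := ringChar.charP F
    have hprime : (ringChar F).Prime := CharP.char_is_prime F (ringChar F)
    have hdvd : ringChar F ∣ 2 ^ e := by
      rw [← hF]
      exact (CharP.cast_eq_zero_iff F (ringChar F) (Fintype.card F)).mp
        (FiniteField.cast_card_eq_zero F)
    have : ringChar F = 2 :=
      (Nat.prime_dvd_prime_iff_eq hprime Nat.prime_two).mp (hprime.dvd_of_dvd_pow hdvd)
    rwa [this] at hchar
  ext w
  simp only [Set.mem_setOf_eq, Set.mem_insert_iff, Set.mem_singleton_iff]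
  constructor
  · rintro ⟨x, z, rfl⟩
    by_cases hz : z = 0
    · left; rw [hz, zero_mul]
    by_cases hroot : ∀ α : F, x + α + α ^ 2 * z ≠ 0
    · right; exact key z x hz hroot
    · push_neg at hroot
      obtain ⟨α, hα⟩ := hroot
      left
      rw [Finset.prod_eq_zero (Finset.mem_univ α) hα, mul_zero]
  · rintro (rfl | rfl)
    · exact ⟨0, 0, by rw [zero_mul]⟩
    · -- find x outside the image of α ↦ α + α²
      have hni : ¬ Function.Injective (fun α : F => α + α ^ 2) := by
        intro h
        have h01 := h (a₁ := 0) (a₂ := 1) (by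
          simp only []
          rw [one_pow]
          rw [show (1:F) + 1 = 0 from CharTwo.add_self_eq_zero 1]
          simp)
        exact zero_ne_one h01
      have hns : ¬ Function.Surjective (fun α : F => α + α ^ 2) := by
        intro h
        exact hni (Finite.injective_iff_surjective.mpr h)
      rw [Function.Surjective] at hns
      push_neg at hns
      obtain ⟨x, hxns⟩ := hns
      refine ⟨x, 1, ?_⟩
      have hx : ∀ α : F, x + α + α ^ 2 * 1 ≠ 0 := by
        intro α hcontra
        apply hxns α
        rw [mul_one] at hcontra
        have : α + α ^ 2 = -x := by linear_combination hcontra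
        rw [this, CharTwo.neg_eq]
      exact (key 1 x one_ne_zero hx).symm
end

section
/- Let q = 2^e with e ≥ 2, let F_q be the finite field with q elements, let K be a commutative F_q-algebra, and let c ∈ K. Define F(X,Y,Z) := Z·∏_{α∈F_q}(X + αY + α²Z) + c·Y^{q+1} ∈ K[X,Y,Z] (the homogenization of degree q+1 of f(x,y) = ∏_{α∈F_q}(x + αy + α²) + c·y^{q+1}). Then F is symmetric in X and Z: F(Z,Y,X) = F(X,Y,Z) in K[X,Y,Z]. -/
open MvPolynomial Finset

/-- For `q = 2^e`, an `F_q`-algebra `K` and `c ∈ K`, the homogeneous polynomial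
`F(X,Y,Z) = Z·∏_{α ∈ F_q}(X + αY + α²Z) + c·Y^(q+1)` is symmetric in `X` and
`Z`: `F(Z,Y,X) = F(X,Y,Z)`. -/
theorem F_symmetric_in_X_Z (e : ℕ) (he : 2 ≤ e)
    (Fq : Type*) [Field Fq] [Fintype Fq] (hF : Fintype.card Fq = 2 ^ e)
    (K : Type*) [CommRing K] [Algebra Fq K] (c : K)
    (F : MvPolynomial (Fin 3) K)
    (hdef : F = X 2 * (∏ α : Fq,
        (X 0 + C (algebraMap Fq K α) * X 1 + C (algebraMap Fq K (α ^ 2)) * X 2))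
      + C c * X 1 ^ (2 ^ e + 1)) :
    aeval ![X 2, X 1, X 0] F = F := by
  classical
  -- characteristic 2
  have hchar : ringChar Fq = 2 := by
    obtain ⟨n, hp, hcard⟩ := FiniteField.card Fq (ringChar Fq)
    have : ringChar Fq ∣ 2 ^ e := by
      rw [← hF, hcard]
      exact dvd_pow_self _ (by positivity)
    have h2 := (Nat.Prime.dvd_of_dvd_pow hp this)
    exact (Nat.prime_dvd_prime_iff_eq hp Nat.prime_two).mp h2
  haveI : CharP Fq 2 := hchar ▸ ringChar.charP Fq
  have hsqinj : Function.Injective (fun α : Fq => α ^ 2) := by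
    intro a b hab
    have := frobenius_inj Fq 2
    simpa [frobenius_def] using this (by simpa [frobenius_def] using hab)
  set ψ : Fq → MvPolynomial (Fin 3) K := fun α => C (algebraMap Fq K α) with hψ
  have hψmul : ∀ a b : Fq, ψ (a * b) = ψ a * ψ b := by
    intro a b; simp [hψ, map_mul]
  set S : Finset Fq := Finset.univ.erase 0 with hS
  have hSmem : ∀ {α : Fq}, α ∈ S ↔ α ≠ 0 := by
    intro α; simp [hS]
  -- product of squares over S equals product over S
  have hsq_image : S.image (fun α : Fq => α ^ 2) = S := by
    apply Finset.eq_of_subset_of_card_le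
    · intro b hb
      simp only [Finset.mem_image] at hb
      obtain ⟨a, ha, rfl⟩ := hb
      rw [hSmem] at ha ⊢
      exact pow_ne_zero _ ha
    · rw [Finset.card_image_of_injective _ hsqinj]
  have hinv_image : S.image (fun α : Fq => α⁻¹) = S := by
    apply Finset.eq_of_subset_of_card_le
    · intro b hb
      simp only [Finset.mem_image] at hb
      obtain ⟨a, ha, rfl⟩ := hb
      rw [hSmem] at ha ⊢
      exact inv_ne_zero ha
    · rw [Finset.card_image_of_injective _ inv_injective]
  have hprodS : ∏ α ∈ S, α = 1 := by
    have h1 : (∏ α ∈ S, α) * (∏ α ∈ S, α) = 1 * (∏ α ∈ S, α) := by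
      rw [one_mul, ← sq, ← Finset.prod_pow]
      conv_rhs => rw [← hsq_image]
      rw [Finset.prod_image (fun a _ b _ h => hsqinj h)]
    have hne : (∏ α ∈ S, α) ≠ 0 :=
      Finset.prod_ne_zero_iff.mpr fun α hα => hSmem.mp hα
    exact mul_right_cancel₀ hne h1
  -- main products
  set g : Fq → MvPolynomial (Fin 3) K :=
    fun α => X 0 + ψ α * X 1 + ψ (α ^ 2) * X 2 with hg
  set f : Fq → MvPolynomial (Fin 3) K :=
    fun α => X 2 + ψ α * X 1 + ψ (α ^ 2) * X 0 with hf
  have key : X 0 * ∏ α : Fq, f α = X 2 * ∏ α : Fq, g α := by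
    have h0 : (0 : Fq) ∈ Finset.univ := Finset.mem_univ _
    rw [← Finset.mul_prod_erase Finset.univ f h0,
        ← Finset.mul_prod_erase Finset.univ g h0, ← hS]
    have hf0 : f 0 = X 2 := by simp [hf, hψ]
    have hg0 : g 0 = X 0 := by simp [hg, hψ]
    rw [hf0, hg0]
    have hfact : ∀ α ∈ S, f α = ψ (α ^ 2) * g α⁻¹ := by
      intro α hα
      have hα0 : α ≠ 0 := hSmem.mp hα
      rw [hg, hf]
      simp only [mul_add, ← mul_assoc, ← hψmul]
      have e1 : α ^ 2 * α⁻¹ = α := by field_simp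
      have e2 : α ^ 2 * α⁻¹ ^ 2 = 1 := by field_simp
      rw [e1, e2]
      have : ψ 1 = 1 := by simp [hψ]
      rw [this, one_mul]
      ring
    rw [Finset.prod_congr rfl hfact, Finset.prod_mul_distrib]
    have hψprod : (∏ α ∈ S, ψ (α ^ 2)) = 1 := by
      have h2 : (∏ α ∈ S, α ^ 2) = 1 := by
        rw [Finset.prod_pow, hprodS, one_pow]
      simp only [hψ, ← map_pow, ← map_prod]
      rw [h2]
      simp
    have hginv : (∏ α ∈ S, g α⁻¹) = ∏ α ∈ S, g α := by
      conv_rhs => rw [← hinv_image, Finset.prod_image (fun a _ b _ h => inv_injective h)]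
    rw [hψprod, hginv, one_mul]
    ring
  -- finish
  subst hdef
  simp only [map_add, map_mul, map_pow, map_prod, aeval_X, aeval_C]
  simp only [Matrix.cons_val_zero, Matrix.cons_val_one, Matrix.head_cons,
    Matrix.cons_val_two, Matrix.tail_cons]
  rw [algebraMap_eq]
  congr 1
  simpa [hf, hg, hψ] using key
end

section
/- Let q = 2^e with e ≥ 2, let K be an algebraically closed field of characteristic 2 containing F_q, and let c ∈ K with c ≠ 0 and c ≠ 1. Define F(X,Y,Z) := Z·∏_{α∈F_q}(X + αY + α²Z) + c·Y^{q+1} ∈ K[X,Y,Z]. Then the projective plane curve F = 0 is smooth: there is no (x,y,z) ∈ K³ \ {(0,0,0)} at which F and all three partial derivatives F_X, F_Y, F_Z vanish simultaneously. -/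
set_option linter.unusedSectionVars false
section Aux
open Polynomial Finset

theorem my_deriv_prod {R ι : Type*} [CommRing R] [DecidableEq ι] (s : Finset ι)
    (g : ι → Polynomial R) :
    derivative (∏ j ∈ s, g j) = ∑ j ∈ s, (∏ k ∈ s.erase j, g k) * derivative (g j) := by
  induction s using Finset.induction_on with
  | empty => simp
  | @insert a s ha ih =>
    rw [Finset.prod_insert ha, derivative_mul, ih, Finset.sum_insert ha,
      Finset.erase_insert ha, Finset.mul_sum]
    congr 1
    · ring
    · refine Finset.sum_congr rfl fun j hj => ?_
      rw [Finset.erase_insert_of_ne (by rintro rfl; exact ha hj),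
        Finset.prod_insert (fun h => ha (Finset.mem_of_mem_erase h))]
      ring

theorem my_fq_prod (Fq : Type*) [Field Fq] [Fintype Fq] [DecidableEq Fq] :
    ∏ α : Fq, (X - C α) = X ^ Fintype.card Fq - X := by
  have hq : 1 < Fintype.card Fq := Fintype.one_lt_card
  have hm : (X ^ Fintype.card Fq - X : Fq[X]).Monic := by
    apply monic_X_pow_sub
    rw [degree_X]
    exact_mod_cast hq
  have hr := FiniteField.roots_X_pow_card_sub_X Fq
  have hcard : Multiset.card (X ^ Fintype.card Fq - X : Fq[X]).roots
      = (X ^ Fintype.card Fq - X : Fq[X]).natDegree := by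
    rw [hr, FiniteField.X_pow_card_sub_X_natDegree_eq Fq hq]
    simp
  have h := prod_multiset_X_sub_C_of_monic_of_roots_card_eq hm hcard
  rw [hr] at h
  exact h

variable {Fq K : Type*} [Field Fq] [Fintype Fq] [DecidableEq Fq] [Field K] [CharP K 2]
  (f : Fq →+* K)

theorem my_prodK : ∏ α : Fq, (X - C (f α)) = X ^ Fintype.card Fq - X := by
  have h := congrArg (Polynomial.map f) (my_fq_prod Fq)
  rw [Polynomial.map_sub, Polynomial.map_pow, Polynomial.map_X] at h
  rw [← h, Polynomial.map_prod]
  simp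

theorem my_key1 (β : K) : ∏ α : Fq, (β + f α) = β ^ Fintype.card Fq + β := by
  have h := congrArg (Polynomial.eval β) (my_prodK f)
  rw [eval_sub, eval_pow, eval_X, eval_prod] at h
  simp only [eval_sub, eval_X, eval_C] at h
  simpa [CharTwo.sub_eq_add] using h

theorem my_key2 (hq : ((Fintype.card Fq : ℕ) : K) = 0) (β : K) :
    ∑ α : Fq, ∏ γ ∈ Finset.univ.erase α, (β + f γ) = 1 := by
  have h := congrArg derivative (my_prodK f)
  rw [my_deriv_prod, derivative_sub, derivative_X, derivative_X_pow] at h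
  have h2 := congrArg (Polynomial.eval β) h
  rw [Polynomial.eval_finset_sum] at h2
  simp only [derivative_sub, derivative_X, derivative_C, eval_mul, eval_prod, eval_sub,
    eval_X, eval_C, eval_pow, eval_one, eval_natCast, sub_zero, mul_one] at h2
  rw [hq, zero_mul, zero_sub] at h2
  rw [← CharTwo.neg_eq (R := K) 1, ← h2]
  refine Finset.sum_congr rfl fun α _ => ?_
  exact Finset.prod_congr rfl fun γ _ => (CharTwo.sub_eq_add _ _).symm

theorem my_sum_univ (h2 : 2 < Fintype.card Fq) : ∑ α : Fq, α = 0 := by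
  obtain ⟨t, ht, hne1⟩ := Finset.exists_mem_ne
    (s := (Finset.univ.erase (0 : Fq)))
    (by rw [Finset.card_erase_of_mem (Finset.mem_univ _), Finset.card_univ]; omega) 1
  have ht0 : t ≠ 0 := Finset.ne_of_mem_erase ht
  have hb : ∑ α : Fq, t * α = ∑ α : Fq, α := Fintype.sum_equiv (Equiv.mulLeft₀ t ht0) _ _ (fun _ => rfl)
  rw [← Finset.mul_sum] at hb
  have : (t - 1) * ∑ α : Fq, α = 0 := by rw [sub_mul, one_mul, hb, sub_self]
  rcases mul_eq_zero.1 this with h | h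
  · exact absurd (sub_eq_zero.1 h) hne1
  · exact h

theorem my_key3 (hq : ((Fintype.card Fq : ℕ) : K) = 0) (β : K) :
    ∑ α : Fq, f α * ∏ γ ∈ Finset.univ.erase α, (β + f γ) = β := by
  have step : ∀ α : Fq, f α * ∏ γ ∈ Finset.univ.erase α, (β + f γ)
      = (∏ γ : Fq, (β + f γ)) + β * ∏ γ ∈ Finset.univ.erase α, (β + f γ) := by
    intro α
    rw [← Finset.mul_prod_erase _ _ (Finset.mem_univ α)]
    have h2 : β + β = 0 := CharTwo.add_self_eq_zero _
    linear_combination (-(∏ γ ∈ Finset.univ.erase α, (β + f γ))) * h2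
  calc ∑ α : Fq, f α * ∏ γ ∈ Finset.univ.erase α, (β + f γ)
      = ∑ α : Fq, ((∏ γ : Fq, (β + f γ)) + β * ∏ γ ∈ Finset.univ.erase α, (β + f γ)) :=
        Finset.sum_congr rfl fun α _ => step α
    _ = (Fintype.card Fq) • (∏ γ : Fq, (β + f γ))
        + β * ∑ α : Fq, ∏ γ ∈ Finset.univ.erase α, (β + f γ) := by
        rw [Finset.sum_add_distrib, Finset.sum_const, Finset.card_univ, ← Finset.mul_sum]
    _ = β := by
        rw [my_key2 f hq, nsmul_eq_mul, hq, zero_mul, zero_add, mul_one]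

theorem my_key4 (hq : ((Fintype.card Fq : ℕ) : K) = 0) (hs : ∑ α : Fq, α = 0) (β : K) :
    ∑ α : Fq, (f α) ^ 2 * ∏ γ ∈ Finset.univ.erase α, (β + f γ) = β ^ 2 := by
  have step : ∀ α : Fq, (f α) ^ 2 * ∏ γ ∈ Finset.univ.erase α, (β + f γ)
      = (β + f α) * ((β ^ Fintype.card Fq) + β)
        + β ^ 2 * ∏ γ ∈ Finset.univ.erase α, (β + f γ) := by
    intro α
    have hall : (β + f α) * ∏ γ ∈ Finset.univ.erase α, (β + f γ)
        = (β ^ Fintype.card Fq) + β := by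
      rw [Finset.mul_prod_erase Finset.univ (fun γ => β + f γ) (Finset.mem_univ α), my_key1]
    have h2 : β + β = 0 := CharTwo.add_self_eq_zero _
    linear_combination (β + f α) * hall
      + (-(∏ γ ∈ Finset.univ.erase α, (β + f γ)) * (β + f α)) * h2
  calc ∑ α : Fq, (f α) ^ 2 * ∏ γ ∈ Finset.univ.erase α, (β + f γ)
      = ∑ α : Fq, ((β + f α) * ((β ^ Fintype.card Fq) + β)
          + β ^ 2 * ∏ γ ∈ Finset.univ.erase α, (β + f γ)) :=
        Finset.sum_congr rfl fun α _ => step α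
    _ = (∑ α : Fq, (β + f α)) * ((β ^ Fintype.card Fq) + β)
        + β ^ 2 * ∑ α : Fq, ∏ γ ∈ Finset.univ.erase α, (β + f γ) := by
        rw [Finset.sum_add_distrib, ← Finset.sum_mul, ← Finset.mul_sum]
    _ = β ^ 2 := by
        rw [my_key2 f hq, mul_one, Finset.sum_add_distrib, Finset.sum_const, Finset.card_univ,
          ← map_sum, hs, map_zero, add_zero, nsmul_eq_mul, hq, zero_mul, zero_mul, zero_add]

theorem my_key5 (β1 β2 : K) (w : Fq → K) :
    (β1 + β2) * ∑ α : Fq, w α * ∏ γ ∈ Finset.univ.erase α, ((β1 + f γ) * (β2 + f γ))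
      = (β2 ^ Fintype.card Fq + β2)
          * (∑ α : Fq, w α * ∏ γ ∈ Finset.univ.erase α, (β1 + f γ))
        + (β1 ^ Fintype.card Fq + β1)
          * (∑ α : Fq, w α * ∏ γ ∈ Finset.univ.erase α, (β2 + f γ)) := by
  rw [Finset.mul_sum, Finset.mul_sum, Finset.mul_sum, ← Finset.sum_add_distrib]
  refine Finset.sum_congr rfl fun α _ => ?_
  have e1 : (β1 + f α) * ∏ γ ∈ Finset.univ.erase α, (β1 + f γ)
      = β1 ^ Fintype.card Fq + β1 := by
    rw [Finset.mul_prod_erase Finset.univ (fun γ => β1 + f γ) (Finset.mem_univ α), my_key1]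
  have e2 : (β2 + f α) * ∏ γ ∈ Finset.univ.erase α, (β2 + f γ)
      = β2 ^ Fintype.card Fq + β2 := by
    rw [Finset.mul_prod_erase Finset.univ (fun γ => β2 + f γ) (Finset.mem_univ α), my_key1]
  have esplit : ∏ γ ∈ Finset.univ.erase α, ((β1 + f γ) * (β2 + f γ))
      = (∏ γ ∈ Finset.univ.erase α, (β1 + f γ)) * (∏ γ ∈ Finset.univ.erase α, (β2 + f γ)) :=
    Finset.prod_mul_distrib
  have h2 : f α + f α = 0 := CharTwo.add_self_eq_zero _
  rw [esplit, ← e1, ← e2]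
  linear_combination (-(w α * (∏ γ ∈ Finset.univ.erase α, (β1 + f γ))
    * (∏ γ ∈ Finset.univ.erase α, (β2 + f γ)))) * h2

theorem my_pderiv_prod {R σ ι : Type*} [CommRing R] [DecidableEq ι] (i : σ) (s : Finset ι)
    (g : ι → MvPolynomial σ R) :
    MvPolynomial.pderiv i (∏ j ∈ s, g j)
      = ∑ j ∈ s, (∏ k ∈ s.erase j, g k) * MvPolynomial.pderiv i (g j) := by
  induction s using Finset.induction_on with
  | empty => simp
  | @insert a s ha ih =>
    rw [Finset.prod_insert ha, MvPolynomial.pderiv_mul, ih, Finset.sum_insert ha,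
      Finset.erase_insert ha, Finset.mul_sum]
    congr 1
    · ring
    · refine Finset.sum_congr rfl fun j hj => ?_
      rw [Finset.erase_insert_of_ne (by rintro rfl; exact ha hj),
        Finset.prod_insert (fun h => ha (Finset.mem_of_mem_erase h))]
      ring

end Aux


open MvPolynomial

/-- For `q = 2^e`, an algebraically closed field `K` of characteristic 2
containing `F_q`, and `c ∈ K` with `c ≠ 0, 1`, the projective plane curve
`F(X,Y,Z) = Z·∏_{α ∈ F_q}(X + αY + α²Z) + c·Y^(q+1) = 0` is smooth. -/
theorem curve_F_is_smooth (e : ℕ) (he : 2 ≤ e)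
    (Fq : Type*) [Field Fq] [Fintype Fq] (hF : Fintype.card Fq = 2 ^ e)
    (K : Type*) [Field K] [IsAlgClosed K] [CharP K 2] [Algebra Fq K]
    (c : K) (hc0 : c ≠ 0) (hc1 : c ≠ 1)
    (F : MvPolynomial (Fin 3) K)
    (hdef : F = X 2 * (∏ α : Fq,
        (X 0 + C (algebraMap Fq K α) * X 1 + C (algebraMap Fq K (α ^ 2)) * X 2))
      + C c * X 1 ^ (2 ^ e + 1)) :
    ¬ ∃ v : Fin 3 → K, v ≠ 0 ∧ eval v F = 0 ∧ ∀ i : Fin 3, eval v (pderiv i F) = 0 := by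
  classical
  rintro ⟨v, hv, hF0, hDv⟩
  set p : Fq → K := fun α => v 0 + algebraMap Fq K α * v 1 + (algebraMap Fq K α) ^ 2 * v 2
    with hp
  set P : MvPolynomial (Fin 3) K := ∏ α : Fq,
      (X 0 + C (algebraMap Fq K α) * X 1 + C (algebraMap Fq K (α ^ 2)) * X 2) with hPdef
  have hPv : eval v P = ∏ α : Fq, p α := by
    rw [hPdef, map_prod]
    refine Finset.prod_congr rfl fun α _ => ?_
    simp [hp, map_pow]
  have hev : v 2 * ∏ α : Fq, p α + c * v 1 ^ (2 ^ e + 1) = 0 := by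
    rw [hdef] at hF0
    simp only [map_add, map_mul, map_pow, eval_X, eval_C] at hF0
    rw [hPv] at hF0
    exact hF0
  have hPe : ∀ α : Fq, eval v (∏ γ ∈ Finset.univ.erase α,
      (X 0 + C (algebraMap Fq K γ) * X 1 + C (algebraMap Fq K (γ ^ 2)) * X 2))
      = ∏ γ ∈ Finset.univ.erase α, p γ := by
    intro α
    rw [map_prod]
    refine Finset.prod_congr rfl fun γ _ => ?_
    simp [hp, map_pow]
  have hder : ∀ i : Fin 3, eval v (pderiv i F)
      = eval v (pderiv i (X 2)) * ∏ α : Fq, p α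
        + v 2 * ∑ α : Fq, (∏ γ ∈ Finset.univ.erase α, p γ)
            * eval v (pderiv i (X 0 + C (algebraMap Fq K α) * X 1
                + C (algebraMap Fq K (α ^ 2)) * X 2))
        + c * (((2 ^ e + 1 : ℕ) : K) * v 1 ^ (2 ^ e) * eval v (pderiv i (X 1))) := by
    intro i
    rw [hdef, map_add, pderiv_mul, pderiv_mul, pderiv_C, zero_mul, zero_add, pderiv_pow,
      hPdef, my_pderiv_prod]
    have hnat : eval v (((2 ^ e + 1 : ℕ) : MvPolynomial (Fin 3) K) * X 1 ^ (2 ^ e + 1 - 1))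
        = ((2 ^ e + 1 : ℕ) : K) * v 1 ^ (2 ^ e) := by
      simp
    simp only [map_add, map_mul, map_sum, eval_C, eval_X, hnat, hPe, ← hPdef, hPv]
  -- numeric facts
  have h2K : (2 : K) = 0 := CharTwo.two_eq_zero
  have hqK : ((Fintype.card Fq : ℕ) : K) = 0 := by
    rw [hF]
    push_cast
    rw [h2K]
    exact zero_pow (by omega)
  have h1K : ((2 ^ e + 1 : ℕ) : K) = 1 := by
    push_cast
    rw [h2K, zero_pow (by omega : e ≠ 0), zero_add]
  have hcard2 : 2 < Fintype.card Fq := by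
    rw [hF]
    have : 2 ^ 2 ≤ 2 ^ e := Nat.pow_le_pow_right (by norm_num) he
    omega
  have hcpos : 0 < Fintype.card Fq := Fintype.card_pos
  have hsum : ∑ α : Fq, α = 0 := my_sum_univ hcard2
  have hvpow : v 2 * v 2 ^ (Fintype.card Fq - 1) = v 2 ^ Fintype.card Fq := by
    rw [← pow_succ']
    congr 1
    omega
  set f : Fq →+* K := (algebraMap Fq K : Fq →+* K) with hfdef
  have hfa : ∀ α : Fq, f α = algebraMap Fq K α := fun _ => rfl
  -- values of the partial derivatives of the factors
  have hfac0 : ∀ α : Fq, eval v (pderiv (0 : Fin 3) (X 0 + C (algebraMap Fq K α) * X 1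
      + C (algebraMap Fq K (α ^ 2)) * X 2)) = 1 := by
    intro α
    simp [pderiv_mul, pderiv_C]
  have hfac1 : ∀ α : Fq, eval v (pderiv (1 : Fin 3) (X 0 + C (algebraMap Fq K α) * X 1
      + C (algebraMap Fq K (α ^ 2)) * X 2)) = algebraMap Fq K α := by
    intro α
    simp [pderiv_mul, pderiv_C]
  have hfac2 : ∀ α : Fq, eval v (pderiv (2 : Fin 3) (X 0 + C (algebraMap Fq K α) * X 1
      + C (algebraMap Fq K (α ^ 2)) * X 2)) = (algebraMap Fq K α) ^ 2 := by
    intro α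
    simp [pderiv_mul, pderiv_C, map_pow]
  -- the three derivative equations
  have hE0 : v 2 * ∑ α : Fq, ∏ γ ∈ Finset.univ.erase α, p γ = 0 := by
    have h := (hder 0).symm.trans (hDv 0)
    simp only [hfa, hfac0, mul_one, pderiv_X_of_ne (show (2 : Fin 3) ≠ 0 by decide),
      pderiv_X_of_ne (show (1 : Fin 3) ≠ 0 by decide), map_zero, zero_mul, mul_zero,
      add_zero, zero_add] at h
    exact h
  have hE1 : v 2 * ∑ α : Fq, (∏ γ ∈ Finset.univ.erase α, p γ) * algebraMap Fq K α
      + c * v 1 ^ (2 ^ e) = 0 := by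
    have h := (hder 1).symm.trans (hDv 1)
    simp only [hfa, hfac1, pderiv_X_of_ne (show (2 : Fin 3) ≠ 1 by decide), pderiv_X_self,
      map_zero, map_one, zero_mul, mul_one, one_mul, zero_add, h1K] at h
    exact h
  have hE2 : (∏ α : Fq, p α) + v 2 * ∑ α : Fq, (∏ γ ∈ Finset.univ.erase α, p γ)
      * (algebraMap Fq K α) ^ 2 = 0 := by
    have h := (hder 2).symm.trans (hDv 2)
    simp only [hfa, hfac2, pderiv_X_of_ne (show (1 : Fin 3) ≠ 2 by decide), pderiv_X_self,
      map_zero, map_one, zero_mul, mul_zero, one_mul, add_zero] at h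
    exact h
  -- Case 1 : v 2 = 0
  by_cases hz : v 2 = 0
  · have hy : v 1 = 0 := by
      rw [hz, zero_mul, zero_add] at hev
      rcases mul_eq_zero.1 hev with h | h
      · exact absurd h hc0
      · exact pow_eq_zero_iff (by omega) |>.1 h
    have hx : v 0 = 0 := by
      have hpconst : ∀ α : Fq, p α = v 0 := by
        intro α
        simp [hp, hy, hz]
      have hprod : ∏ α : Fq, p α = v 0 ^ Fintype.card Fq := by
        rw [Finset.prod_congr rfl fun α _ => hpconst α, Finset.prod_const, Finset.card_univ]
      rw [hz, zero_mul, add_zero, hprod] at hE2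
      exact pow_eq_zero_iff (by omega) |>.1 hE2
    exact hv (funext fun i => by fin_cases i <;> assumption)
  -- Case 2 : v 2 ≠ 0, v 1 = 0
  by_cases hy : v 1 = 0
  · have hprod0 : ∏ α : Fq, p α = 0 := by
      rw [hy, zero_pow (by omega : 2 ^ e + 1 ≠ 0), mul_zero, add_zero] at hev
      exact (mul_eq_zero.1 hev).resolve_left hz
    obtain ⟨α0, -, hα0⟩ := Finset.prod_eq_zero_iff.mp hprod0
    have hfacs : ∀ γ : Fq, p γ = v 2 * (algebraMap Fq K α0 + algebraMap Fq K γ) ^ 2 := by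
      intro γ
      have h0 : v 0 + (algebraMap Fq K α0) ^ 2 * v 2 = 0 := by
        have := hα0
        rw [hp] at this
        simpa [hy] using this
      have hsq := CharTwo.add_sq (algebraMap Fq K α0) (algebraMap Fq K γ)
      have h2s : (algebraMap Fq K α0) ^ 2 + (algebraMap Fq K α0) ^ 2 = 0 :=
        CharTwo.add_self_eq_zero _
      rw [hp]
      simp only [hy, mul_zero, add_zero]
      linear_combination h0 - v 2 * hsq - v 2 * h2s
    have hstep : ∀ α : Fq, ∏ γ ∈ Finset.univ.erase α, p γ
        = v 2 ^ (Fintype.card Fq - 1)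
          * (∏ γ ∈ Finset.univ.erase α, (algebraMap Fq K α0 + algebraMap Fq K γ)) ^ 2 := by
      intro α
      rw [Finset.prod_congr rfl fun γ _ => hfacs γ, Finset.prod_mul_distrib,
        Finset.prod_const, Finset.card_erase_of_mem (Finset.mem_univ _), Finset.card_univ,
        Finset.prod_pow]
    have hsum2 : ∑ α : Fq, ∏ γ ∈ Finset.univ.erase α, p γ
        = v 2 ^ (Fintype.card Fq - 1) := by
      rw [Finset.sum_congr rfl fun α _ => hstep α, ← Finset.mul_sum,
        ← sum_pow_char 2, my_key2 f hqK (algebraMap Fq K α0), one_pow, mul_one]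
    rw [hsum2, hvpow] at hE0
    exact pow_ne_zero _ hz hE0
  -- Case 3 : v 2 ≠ 0, v 1 ≠ 0
  · obtain ⟨β1, hβ1⟩ := IsAlgClosed.exists_root
      (Polynomial.C (v 2) * Polynomial.X ^ 2 + Polynomial.C (v 1) * Polynomial.X
        + Polynomial.C (v 0))
      (by rw [Polynomial.degree_quadratic hz]; decide)
    have hroot : v 2 * β1 ^ 2 + v 1 * β1 + v 0 = 0 := by
      simpa [Polynomial.IsRoot] using hβ1
    obtain ⟨β2, hβ2def⟩ : ∃ b : K, b = β1 + v 1 / v 2 := ⟨_, rfl⟩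
    have hb12 : v 2 * (β1 + β2) = v 1 := by
      have h1 : β1 + (β1 + v 1 / v 2) = v 1 / v 2 := by
        rw [← add_assoc, CharTwo.add_self_eq_zero, zero_add]
      rw [hβ2def, h1, mul_div_cancel₀ _ hz]
    have hprod12 : v 2 * (β1 * β2) = v 0 := by
      have h1 : v 2 * (β1 * β2) = v 2 * β1 ^ 2 + v 1 * β1 := by
        rw [hβ2def]
        field_simp
      have h2 : v 0 + v 0 = 0 := CharTwo.add_self_eq_zero _
      linear_combination h1 + hroot - h2
    have hfacs : ∀ γ : Fq, p γ
        = v 2 * ((β1 + algebraMap Fq K γ) * (β2 + algebraMap Fq K γ)) := by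
      intro γ
      rw [hp]
      simp only
      linear_combination (-1 : K) * hprod12 - algebraMap Fq K γ * hb12
    have hβs0 : β1 + β2 ≠ 0 := fun h => hy (by rw [← hb12, h, mul_zero])
    have hRs : ∀ α : Fq, ∏ γ ∈ Finset.univ.erase α, p γ
        = v 2 ^ (Fintype.card Fq - 1) * ∏ γ ∈ Finset.univ.erase α,
            ((β1 + algebraMap Fq K γ) * (β2 + algebraMap Fq K γ)) := by
      intro α
      rw [Finset.prod_congr rfl fun γ _ => hfacs γ, Finset.prod_mul_distrib,
        Finset.prod_const, Finset.card_erase_of_mem (Finset.mem_univ _), Finset.card_univ]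
    have hProdp : ∏ α : Fq, p α = v 2 ^ Fintype.card Fq
        * ((β1 ^ Fintype.card Fq + β1) * (β2 ^ Fintype.card Fq + β2)) := by
      rw [Finset.prod_congr rfl fun γ _ => hfacs γ, Finset.prod_mul_distrib,
        Finset.prod_const, Finset.card_univ, Finset.prod_mul_distrib,
        my_key1 f β1, my_key1 f β2]
    have hvq : (v 2 : K) ^ Fintype.card Fq ≠ 0 := pow_ne_zero _ hz
    -- E0 gives that the sum of the R12 vanishes
    have hS0 : ∑ α : Fq, ∏ γ ∈ Finset.univ.erase α,
        ((β1 + algebraMap Fq K γ) * (β2 + algebraMap Fq K γ)) = 0 := by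
      have h : v 2 * ∑ α : Fq, ∏ γ ∈ Finset.univ.erase α, p γ
          = v 2 ^ Fintype.card Fq * ∑ α : Fq, ∏ γ ∈ Finset.univ.erase α,
              ((β1 + algebraMap Fq K γ) * (β2 + algebraMap Fq K γ)) := by
        rw [Finset.sum_congr rfl fun α _ => hRs α, ← Finset.mul_sum, ← mul_assoc, hvpow]
      rw [h] at hE0
      exact (mul_eq_zero.1 hE0).resolve_left hvq
    -- N1 = N2
    have k5a := my_key5 f β1 β2 (fun _ => (1 : K))
    simp only [one_mul] at k5a
    rw [my_key2 f hqK β1, my_key2 f hqK β2, hS0, mul_zero, mul_one, mul_one] at k5a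
    have hN12 : β1 ^ Fintype.card Fq + β1 = β2 ^ Fintype.card Fq + β2 := by
      have h2 : (β2 ^ Fintype.card Fq + β2) + (β2 ^ Fintype.card Fq + β2) = 0 :=
        CharTwo.add_self_eq_zero _
      linear_combination -k5a - h2
    -- U1 and U2
    have k5b := my_key5 f β1 β2 (fun α => f α)
    rw [my_key3 f hqK β1, my_key3 f hqK β2] at k5b
    have k5c := my_key5 f β1 β2 (fun α => (f α) ^ 2)
    rw [my_key4 f hqK hsum β1, my_key4 f hqK hsum β2] at k5c
    have hU1N : (∑ α : Fq, f α * ∏ γ ∈ Finset.univ.erase α,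
          ((β1 + algebraMap Fq K γ) * (β2 + algebraMap Fq K γ)))
        = β1 ^ Fintype.card Fq + β1 := by
      refine mul_left_cancel₀ hβs0 ?_
      rw [k5b, hN12]
      ring
    have hU2N : (∑ α : Fq, (f α) ^ 2 * ∏ γ ∈ Finset.univ.erase α,
          ((β1 + algebraMap Fq K γ) * (β2 + algebraMap Fq K γ)))
        = (β1 ^ Fintype.card Fq + β1) * (β1 + β2) := by
      refine mul_left_cancel₀ hβs0 ?_
      have hsq := CharTwo.add_sq β1 β2
      rw [k5c, hN12]
      linear_combination (-(β2 ^ Fintype.card Fq + β2)) * hsq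
    -- rewrite E1 and E2
    have hE1' : v 2 ^ Fintype.card Fq * (β1 ^ Fintype.card Fq + β1) + c * v 1 ^ (2 ^ e) = 0 := by
      have h : v 2 * ∑ α : Fq, (∏ γ ∈ Finset.univ.erase α, p γ) * algebraMap Fq K α
          = v 2 ^ Fintype.card Fq * ∑ α : Fq, f α * ∏ γ ∈ Finset.univ.erase α,
              ((β1 + algebraMap Fq K γ) * (β2 + algebraMap Fq K γ)) := by
        rw [Finset.mul_sum, Finset.mul_sum]
        refine Finset.sum_congr rfl fun α _ => ?_
        rw [hRs α, hfa]
        linear_combination ((∏ γ ∈ Finset.univ.erase α,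
          ((β1 + algebraMap Fq K γ) * (β2 + algebraMap Fq K γ))) * algebraMap Fq K α) * hvpow
      rw [h, hU1N] at hE1
      exact hE1
    have hE2' : v 2 ^ Fintype.card Fq
          * ((β1 ^ Fintype.card Fq + β1) * (β2 ^ Fintype.card Fq + β2))
        + v 2 ^ Fintype.card Fq * ((β1 ^ Fintype.card Fq + β1) * (β1 + β2)) = 0 := by
      have h : v 2 * ∑ α : Fq, (∏ γ ∈ Finset.univ.erase α, p γ) * (algebraMap Fq K α) ^ 2
          = v 2 ^ Fintype.card Fq * ∑ α : Fq, (f α) ^ 2 * ∏ γ ∈ Finset.univ.erase α,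
              ((β1 + algebraMap Fq K γ) * (β2 + algebraMap Fq K γ)) := by
        rw [Finset.mul_sum, Finset.mul_sum]
        refine Finset.sum_congr rfl fun α _ => ?_
        rw [hRs α, hfa]
        linear_combination ((∏ γ ∈ Finset.univ.erase α,
          ((β1 + algebraMap Fq K γ) * (β2 + algebraMap Fq K γ))) * (algebraMap Fq K α) ^ 2) * hvpow
      rw [h, hU2N, hProdp] at hE2
      exact hE2
    -- N1 ≠ 0
    have hN1ne : β1 ^ Fintype.card Fq + β1 ≠ 0 := by
      intro h0
      have hzero : ∏ α : Fq, p α = 0 := by rw [hProdp, h0, zero_mul, mul_zero]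
      rw [hzero, mul_zero, zero_add] at hev
      rcases mul_eq_zero.1 hev with h | h
      · exact hc0 h
      · exact hy (pow_eq_zero_iff (by omega) |>.1 h)
    -- N1 = β1 + β2
    have hNs : β1 ^ Fintype.card Fq + β1 = β1 + β2 := by
      have h : v 2 ^ Fintype.card Fq * ((β1 ^ Fintype.card Fq + β1)
          * ((β1 ^ Fintype.card Fq + β1) + (β1 + β2))) = 0 := by
        rw [← hN12] at hE2'
        linear_combination hE2'
      have h2 := (mul_eq_zero.1 h).resolve_left hvq
      have h3 := (mul_eq_zero.1 h2).resolve_left hN1ne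
      have h4 : (β1 + β2) + (β1 + β2) = 0 := CharTwo.add_self_eq_zero _
      linear_combination h3 - h4
    -- Frobenius fixes β1 + β2
    have hfrob : (β1 + β2) ^ Fintype.card Fq = β1 + β2 := by
      have hpow : (β1 + β2) ^ Fintype.card Fq
          = β1 ^ Fintype.card Fq + β2 ^ Fintype.card Fq := by
        rw [hF]
        exact add_pow_char_pow β1 β2 2 e
      have hNN : (β1 ^ Fintype.card Fq + β1) + (β2 ^ Fintype.card Fq + β2) = 0 := by
        rw [hN12]
        exact CharTwo.add_self_eq_zero _
      rw [hpow]
      linear_combination hNN - CharTwo.add_self_eq_zero (β1 + β2)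
    -- conclude c = 1
    have hv1 : v 1 ^ (2 ^ e) = v 2 ^ Fintype.card Fq * (β1 + β2) := by
      rw [← hb12, mul_pow, ← hF, hfrob]
    have hfinal : (c - 1) * (v 2 ^ Fintype.card Fq * (β1 + β2)) = 0 := by
      rw [hv1, hNs] at hE1'
      linear_combination hE1' - CharTwo.add_self_eq_zero (v 2 ^ Fintype.card Fq * (β1 + β2))
    rcases mul_eq_zero.1 hfinal with h | h
    · exact hc1 (by linear_combination h)
    · rcases mul_eq_zero.1 h with h' | h'
      · exact hvq h'
      · exact hβs0 h'
end

section
/- Let q = 2^e with e ≥ 2, let K be an algebraically closed field of characteristic 2 containing F_q, let c ∈ K with c ≠ 0 and c ≠ 1, and let K(t) be the field of rational functions in one variable t over K. Then the polynomial φ(X) := ∏_{α∈F_q}(X + αt + α²) + c·t^{q+1} ∈ K(t)[X] is irreducible of degree q over K(t), and the field extension K(t)[X]/(φ) of K(t) is a Galois extension (of degree q). (This expresses that the point (1:0:0) is an inner Galois point of the smooth plane curve ∏_{α∈F_q}(x + αy + α²) + c·y^{q+1} = 0, the Galois group being generated by the substitutions x ↦ x + αy + α² for α ∈ F_q.) 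-/
open Polynomial


/-- monic divisor of same degree equals the polynomial -/
lemma monic_dvd_eq_aux {F : Type*} [Field F] {p q : Polynomial F}
    (hp : p.Monic) (hq : q.Monic) (hdvd : p ∣ q) (hdeg : q.natDegree ≤ p.natDegree) :
    p = q := by
  obtain ⟨r, hr⟩ := hdvd
  have hr0 : r ≠ 0 := by
    rintro rfl
    rw [mul_zero] at hr
    exact hq.ne_zero hr
  have hdr : r.natDegree = 0 := by
    have := hr ▸ hdeg
    rw [natDegree_mul hp.ne_zero hr0] at this
    omega
  obtain ⟨a, ha⟩ := Polynomial.natDegree_eq_zero.mp hdr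
  have hlead : r.leadingCoeff = 1 := by
    have := hq.leadingCoeff
    rw [hr, leadingCoeff_mul, hp.leadingCoeff, one_mul] at this
    exact this
  have : r = 1 := by
    rw [← ha] at hlead ⊢
    rw [leadingCoeff_C] at hlead
    rw [hlead, map_one]
  rw [hr, this, mul_one]

/-- the inversion automorphism of `RatFunc K` -/
lemma ratfunc_inv_equiv (K : Type*) [Field K] :
    ∃ σ : RatFunc K ≃+* RatFunc K,
      σ RatFunc.X = (RatFunc.X : RatFunc K)⁻¹ ∧
      ∀ x : K, σ (algebraMap K (RatFunc K) x) = algebraMap K (RatFunc K) x := by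
  have hmap : ∀ p : Polynomial K,
      Polynomial.aeval (RatFunc.X : RatFunc K) p = algebraMap (Polynomial K) (RatFunc K) p := by
    intro p
    rw [← RatFunc.algebraMap_X, Polynomial.aeval_algebraMap_apply, Polynomial.aeval_X_left_apply]
  have hT : Transcendental K (RatFunc.X : RatFunc K) := by
    rw [transcendental_iff]
    intro p hp
    rw [hmap] at hp
    exact IsFractionRing.injective (Polynomial K) (RatFunc K) (by simpa using hp)
  have hTi : Transcendental K ((RatFunc.X : RatFunc K)⁻¹) := fun h => hT (IsAlgebraic.inv_iff.mp h)
  have hinj : Function.Injective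
      (Polynomial.aeval ((RatFunc.X : RatFunc K)⁻¹) : Polynomial K →ₐ[K] RatFunc K) :=
    transcendental_iff_injective.mp hTi
  set g : Polynomial K →+* RatFunc K :=
    (Polynomial.aeval ((RatFunc.X : RatFunc K)⁻¹) : Polynomial K →ₐ[K] RatFunc K).toRingHom with hg
  have hginj : Function.Injective g := hinj
  set σ0 : RatFunc K →+* RatFunc K := IsFractionRing.lift hginj with hσ0
  have halg : ∀ x : K, algebraMap K (RatFunc K) x
      = algebraMap (Polynomial K) (RatFunc K) (C x) := by
    intro x
    rw [RatFunc.algebraMap_C, RatFunc.algebraMap_eq_C]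
  have hσT : σ0 RatFunc.X = (RatFunc.X : RatFunc K)⁻¹ := by
    rw [← RatFunc.algebraMap_X, hσ0, IsFractionRing.lift_algebraMap]
    simp [hg]
  have hσC : ∀ x : K, σ0 (algebraMap K (RatFunc K) x) = algebraMap K (RatFunc K) x := by
    intro x
    rw [halg, hσ0, IsFractionRing.lift_algebraMap]
    simp [hg, halg]
  have hσσ : σ0.comp σ0 = RingHom.id (RatFunc K) := by
    apply IsLocalization.ringHom_ext (nonZeroDivisors (Polynomial K))
    apply Polynomial.ringHom_ext
    · intro a
      simp only [RingHom.comp_apply, RingHom.id_apply]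
      rw [← halg, hσC, hσC]
    · simp only [RingHom.comp_apply, RingHom.id_apply]
      rw [RatFunc.algebraMap_X, hσT, map_inv₀, hσT, inv_inv]
  exact ⟨RingEquiv.ofRingHom σ0 σ0 hσσ hσσ, hσT, hσC⟩


lemma eisenstein_aux {K : Type*} [Field K] (c : K) (hc : c ≠ 0) (q : ℕ) (hq : 0 < q)
    (g : Polynomial (Polynomial K)) (hg : g.natDegree < q) (hg0 : g.coeff 0 = 1) :
    Irreducible ((C (C c⁻¹ * Polynomial.X) * g + X ^ q).map
        (algebraMap (Polynomial K) (RatFunc K)))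
    ∧ ((C (C c⁻¹ * Polynomial.X) * g + X ^ q).map
        (algebraMap (Polynomial K) (RatFunc K))).natDegree = q := by
  set ψ : Polynomial (Polynomial K) := C (C c⁻¹ * Polynomial.X) * g + X ^ q with hψ
  have hdegCg : (C (C c⁻¹ * Polynomial.X) * g).natDegree < q :=
    lt_of_le_of_lt (natDegree_C_mul_le _ _) hg
  have hmonic : ψ.Monic := by
    rw [hψ, add_comm]
    apply monic_X_pow_add
    exact lt_of_le_of_lt degree_le_natDegree (by exact_mod_cast hdegCg)
  have hdeg : ψ.natDegree = q := by
    rw [hψ, natDegree_add_eq_right_of_natDegree_lt (by rwa [natDegree_X_pow]),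
      natDegree_X_pow]
  have hcoeff : ∀ n, n < q → ψ.coeff n = C c⁻¹ * Polynomial.X * g.coeff n := by
    intro n hn
    rw [hψ, coeff_add, coeff_C_mul, coeff_X_pow, if_neg hn.ne, add_zero]
  have heis : ψ.IsEisensteinAt (Ideal.span {Polynomial.X}) := by
    constructor
    · rw [hmonic.leadingCoeff, Ideal.mem_span_singleton]
      intro h
      exact Polynomial.not_isUnit_X (isUnit_of_dvd_one (h.trans (dvd_of_eq rfl)) : IsUnit _)
    · intro n hn
      rw [hdeg] at hn
      rw [hcoeff n hn, Ideal.mem_span_singleton]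
      exact ⟨C c⁻¹ * g.coeff n, by ring⟩
    · rw [hcoeff 0 hq, hg0, mul_one, Ideal.span_singleton_pow, Ideal.mem_span_singleton]
      intro h
      have h2 : (Polynomial.X : Polynomial K) ^ 2 ∣ Polynomial.X := by
        refine h.trans ⟨C c, ?_⟩
        rw [mul_comm, ← mul_assoc, ← map_mul, mul_inv_cancel₀ hc, map_one, one_mul]
      have := Polynomial.natDegree_le_of_dvd h2 Polynomial.X_ne_zero
      simp [natDegree_X_pow, natDegree_X] at this
  have hirr : Irreducible ψ := heis.irreducible
    (Ideal.span_singleton_prime Polynomial.X_ne_zero |>.mpr Polynomial.prime_X)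
    hmonic.isPrimitive (by omega)
  constructor
  · exact (hmonic.irreducible_iff_irreducible_map_fraction_map).mp hirr
  · rw [natDegree_map_eq_of_injective (IsFractionRing.injective (Polynomial K) (RatFunc K)), hdeg]

set_option maxHeartbeats 2000000 in
set_option synthInstance.maxHeartbeats 1000000 in
/-- For `q = 2^e`, an algebraically closed field `K` of characteristic 2
containing `F_q`, and `c ∈ K \ {0,1}`, the polynomial
`φ(X) = ∏_{α ∈ F_q}(X + αt + α²) + c·t^(q+1)` over the rational function
field `K(t)` is irreducible of degree `q`, and `K(t)[X]/(φ)` is a Galois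
extension of `K(t)`.  (The point `(1:0:0)` is an inner Galois point of the
curve `∏_{α ∈ F_q}(x + αy + α²) + c·y^(q+1) = 0`.) -/
theorem inner_Galois_point_of_curve (e : ℕ) (he : 2 ≤ e)
    (Fq : Type*) [Field Fq] [Fintype Fq] (hF : Fintype.card Fq = 2 ^ e)
    (K : Type*) [Field K] [IsAlgClosed K] [CharP K 2] [Algebra Fq K]
    (c : K) (hc0 : c ≠ 0) (hc1 : c ≠ 1)
    (φ : Polynomial (RatFunc K))
    (hdef : φ = (∏ α : Fq,
        (X + C (algebraMap K (RatFunc K) (algebraMap Fq K α) * RatFunc.X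
          + algebraMap K (RatFunc K) (algebraMap Fq K (α ^ 2)))))
      + C (algebraMap K (RatFunc K) c * RatFunc.X ^ (2 ^ e + 1))) :
    ∃ hφ : Irreducible φ, φ.natDegree = 2 ^ e ∧
      (letI : Fact (Irreducible φ) := ⟨hφ⟩
       IsGalois (RatFunc K) (AdjoinRoot φ)) := by
  classical
  have hq0 : 0 < 2 ^ e := pow_pos two_pos e
  haveI : CharP (RatFunc K) 2 :=
    charP_of_injective_algebraMap (algebraMap K (RatFunc K)).injective 2
  haveI : CharP Fq 2 := by
    constructor
    intro n
    rw [← CharP.cast_eq_zero_iff K 2 n, ← map_natCast (algebraMap Fq K) n, _root_.map_eq_zero]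
  -- abbreviations
  set a : Fq → K := fun α => algebraMap Fq K α with hadef
  set k : K → (RatFunc K) := fun x => algebraMap K (RatFunc K) x with hkdef
  set lF : Fq → (RatFunc K) := fun α => k (a α) * RatFunc.X + k (a (α ^ 2)) with hlFdef
  have hφdef : φ = (∏ α : Fq, (X + C (lF α))) + C (k c * RatFunc.X ^ (2 ^ e + 1)) := hdef
  -- Step A : degree and monicity
  have hPmon : (∏ α : Fq, (X + C (lF α))).Monic :=
    monic_prod_of_monic _ _ fun α _ => monic_X_add_C _
  have hPdeg : (∏ α : Fq, (X + C (lF α))).natDegree = 2 ^ e := by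
    rw [natDegree_prod _ _ fun α _ => (monic_X_add_C _).ne_zero]
    simp [natDegree_X_add_C, Finset.card_univ, hF]
  have hdegφ : φ.natDegree = 2 ^ e := by
    rw [hφdef, natDegree_add_eq_left_of_natDegree_lt, hPdeg]
    rw [natDegree_C, hPdeg]; exact hq0
  have hmonφ : φ.Monic := by
    rw [hφdef]
    apply hPmon.add_of_left
    refine lt_of_le_of_lt (degree_C_le) ?_
    rw [degree_eq_natDegree hPmon.ne_zero, hPdeg]
    exact_mod_cast hq0
  -- additivity of lF
  have hladd : ∀ α β : Fq, lF α + lF β = lF (α + β) := by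
    intro α β
    have hsq : (α + β) ^ 2 = α ^ 2 + β ^ 2 := CharTwo.add_sq α β
    simp only [hlFdef, hadef, hkdef, hsq, map_add]
    ring
  have hlinj : Function.Injective lF := by
    intro α β h
    have h0 : lF (α + β) = 0 := by
      rw [← hladd, h, CharTwo.add_self_eq_zero]
    by_contra hne
    have hδ : α + β ≠ 0 := by
      intro h'
      apply hne
      have := congrArg (· + β) h'
      simpa [add_assoc, CharTwo.add_self_eq_zero] using this
    set δ := α + β
    have haδ : a δ ≠ 0 := by
      simp only [hadef]
      rw [Ne, map_eq_zero_iff _ (algebraMap Fq K).injective]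
      exact hδ
    have h1 : k (a δ) * RatFunc.X = k (a (δ ^ 2)) := by
      have := eq_neg_of_add_eq_zero_left h0
      rwa [CharTwo.neg_eq] at this
    have h2 : (RatFunc.X : RatFunc K) = k ((a δ)⁻¹ * a (δ ^ 2)) := by
      simp only [hkdef] at h1 ⊢
      rw [map_mul, map_inv₀]
      rw [eq_inv_mul_iff_mul_eq₀ (by rwa [Ne, _root_.map_eq_zero])]
      exact h1
    have h3 : algebraMap (Polynomial K) (RatFunc K) Polynomial.X
        = algebraMap (Polynomial K) (RatFunc K) (Polynomial.C ((a δ)⁻¹ * a (δ ^ 2))) := by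
      rw [RatFunc.algebraMap_X, RatFunc.algebraMap_C, ← RatFunc.algebraMap_eq_C]
      exact h2
    exact Polynomial.X_ne_C _ (IsFractionRing.injective (Polynomial K) (RatFunc K) h3)
  -- translation invariance
  have hcomp : ∀ β : Fq, φ.comp (X + C (lF β)) = φ := by
    intro β
    conv_lhs => rw [hφdef]
    conv_rhs => rw [hφdef]
    rw [add_comp, C_comp, prod_comp]
    congr 1
    have hfac : ∀ α : Fq, (X + C (lF α)).comp (X + C (lF β)) = X + C (lF (β + α)) := by
      intro α
      rw [add_comp, X_comp, C_comp, add_assoc, ← C_add, ← hladd]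
    rw [Finset.prod_congr rfl fun α _ => hfac α]
    exact Fintype.prod_equiv (Equiv.addLeft β) _ _ fun γ => rfl
  -- irreducibility
  obtain ⟨σ, hσX, hσC⟩ := ratfunc_inv_equiv K
  have hirrφ : Irreducible φ := by
    set mA : Fq → Polynomial K := fun α => Polynomial.C (a α) + Polynomial.C (a (α ^ 2)) * Polynomial.X with hmA
    set g : Polynomial (Polynomial K) := ∏ α : Fq, (1 + C (mA α) * X) with hgdef
    have hg : g.natDegree < 2 ^ e := by
      have h0 : (1 + C (mA 0) * X : Polynomial (Polynomial K)) = 1 := by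
        simp [hmA, hadef]
      have hd1 : ∀ α : Fq, (1 + C (mA α) * X : Polynomial (Polynomial K)).natDegree ≤ 1 := by
        intro α
        refine le_trans (natDegree_add_le _ _) ?_
        simp only [natDegree_one, max_le_iff]
        exact ⟨Nat.zero_le _, le_trans (natDegree_mul_le) (by simp)⟩
      have hrw : g = ∏ α ∈ Finset.univ.erase (0:Fq), (1 + C (mA α) * X) := by
        rw [hgdef, ← Finset.mul_prod_erase Finset.univ _ (Finset.mem_univ (0 : Fq)), h0, one_mul]
      have h1 := natDegree_prod_le (Finset.univ.erase (0:Fq)) (fun α => 1 + C (mA α) * X)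
      have h2 : ∑ α ∈ Finset.univ.erase (0:Fq), (1 + C (mA α) * X).natDegree
          ≤ (Finset.univ.erase (0:Fq)).card • 1 :=
        Finset.sum_le_card_nsmul _ _ 1 (fun α _ => hd1 α)
      simp only [smul_eq_mul, mul_one] at h2
      have h3 : (Finset.univ.erase (0:Fq)).card = 2 ^ e - 1 := by
        rw [Finset.card_erase_of_mem (Finset.mem_univ _), Finset.card_univ, hF]
      rw [hrw]
      have := le_trans h1 h2
      omega
    have hg0 : g.coeff 0 = 1 := by
      rw [hgdef, coeff_zero_eq_eval_zero, eval_prod]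
      simp
    obtain ⟨hirrψ, hdegψ⟩ := eisenstein_aux c hc0 (2 ^ e) hq0 g hg hg0
    set ψF : Polynomial (RatFunc K) := (C (C c⁻¹ * Polynomial.X) * g + X ^ (2 ^ e)).map
      (algebraMap (Polynomial K) (RatFunc K)) with hψF
    have hjC : ∀ x : K, algebraMap (Polynomial K) (RatFunc K) (Polynomial.C x) = k x := by
      intro x
      simp only [hkdef]
      rw [RatFunc.algebraMap_C, RatFunc.algebraMap_eq_C]
    have hψFform : ψF = C (k c⁻¹ * RatFunc.X) *
        (∏ α : Fq, (1 + C (k (a α) + k (a (α ^ 2)) * RatFunc.X) * X)) + X ^ (2 ^ e) := by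
      rw [hψF, hgdef]
      simp only [Polynomial.map_add, Polynomial.map_mul, Polynomial.map_pow, Polynomial.map_one,
        Polynomial.map_prod, Polynomial.map_X, Polynomial.map_C, map_add, map_mul, hjC,
        RatFunc.algebraMap_X, hmA]
    haveI : Fact (Irreducible ψF) := ⟨hirrψ⟩
    set L := AdjoinRoot ψF with hLdef
    haveI : CharP L 2 := charP_of_injective_algebraMap (algebraMap (RatFunc K) L).injective 2
    set z : L := AdjoinRoot.root ψF with hzdef
    set TL : L := algebraMap (RatFunc K) L RatFunc.X with hTLdef
    set cL : L := algebraMap (RatFunc K) L (k c) with hcLdef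
    set eL : Fq → L := fun α => algebraMap (RatFunc K) L (k (a α)) with heLdef
    set e2L : Fq → L := fun α => algebraMap (RatFunc K) L (k (a (α ^ 2))) with he2Ldef
    have hTL0 : TL ≠ 0 := by
      simp only [hTLdef, ne_eq, _root_.map_eq_zero]
      exact RatFunc.X_ne_zero
    have hcL0 : cL ≠ 0 := by
      simp only [hcLdef, hkdef, ne_eq, _root_.map_eq_zero]
      exact hc0
    have haez : Polynomial.aeval z ψF = 0 := by
      rw [aeval_def, AdjoinRoot.algebraMap_eq]
      exact AdjoinRoot.eval₂_root ψF
    have hzero : cL⁻¹ * TL * (∏ α : Fq, (1 + (eL α + e2L α * TL) * z)) + z ^ (2 ^ e) = 0 := by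
      have haez2 : Polynomial.aeval z (C (k c⁻¹ * RatFunc.X) *
          (∏ α : Fq, (1 + C (k (a α) + k (a (α ^ 2)) * RatFunc.X) * X)) + X ^ (2 ^ e)) = 0 := by
        rw [← hψFform]; exact haez
      have hkc : algebraMap (RatFunc K) L (k c⁻¹) = cL⁻¹ := by
        rw [hcLdef]
        simp only [hkdef]
        rw [map_inv₀, map_inv₀]
      simpa [map_add, map_mul, map_pow, map_prod, aeval_C, aeval_X, hkc, heLdef, he2Ldef,
        hTLdef, mul_assoc] using haez2
    have hz0 : z ≠ 0 := by
      intro h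
      rw [h] at hzero
      have h1 : cL⁻¹ * TL = 0 := by
        simpa [zero_pow hq0.ne'] using hzero
      rcases mul_eq_zero.mp h1 with h2 | h2
      · exact hcL0 (by simpa using inv_eq_zero.mp h2)
      · exact hTL0 h2
    set ξ : AdjoinRoot ψF := (TL * z)⁻¹ with hξdef
    have hξ0 : ξ ≠ 0 := inv_ne_zero (mul_ne_zero hTL0 hz0)
    have hP : (∏ α : Fq, (1 + (eL α + e2L α * TL) * z)) = cL * z ^ (2 ^ e) * TL⁻¹ := by
      have h1 : cL⁻¹ * TL * (∏ α : Fq, (1 + (eL α + e2L α * TL) * z)) = z ^ (2 ^ e) := by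
        have := eq_neg_of_add_eq_zero_left hzero
        rwa [CharTwo.neg_eq] at this
      have h2 := (eq_inv_mul_iff_mul_eq₀ (mul_ne_zero (inv_ne_zero hcL0) hTL0)).mpr h1
      rw [h2, mul_inv, inv_inv]
      ring
    -- explicit form of φ.map σ
    have hφ'form : φ.map (σ : RatFunc K →+* RatFunc K) =
        (∏ α : Fq, (X + C (k (a α) * (RatFunc.X : RatFunc K)⁻¹ + k (a (α ^ 2)))))
          + C (k c * ((RatFunc.X : RatFunc K)⁻¹) ^ (2 ^ e + 1)) := by
      rw [hφdef]
      simp only [Polynomial.map_add, Polynomial.map_prod, Polynomial.map_X, Polynomial.map_C,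
        Polynomial.map_mul, Polynomial.map_pow, hlFdef, map_add, map_mul, map_pow, hkdef,
        RingEquiv.coe_toRingHom, hσX, hσC]
    have hfac : ∀ α : Fq, ξ + (eL α * TL⁻¹ + e2L α) = (TL * z)⁻¹ * (1 + (eL α + e2L α * TL) * z) := by
      intro α
      rw [hξdef]
      field_simp
    have haevalξ : Polynomial.aeval ξ (φ.map (σ : RatFunc K →+* RatFunc K)) = 0 := by
      rw [hφ'form]
      have hkcL : algebraMap (RatFunc K) (AdjoinRoot ψF) (k c) = cL := rfl
      simp only [map_add, map_mul, map_pow, map_prod, aeval_C, aeval_X, map_inv₀, heLdef,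
        he2Ldef, hTLdef, hkcL]
      have hstep : ∀ α : Fq,
          ξ + (algebraMap (RatFunc K) (AdjoinRoot ψF) (k (a α)) *
            (algebraMap (RatFunc K) (AdjoinRoot ψF) RatFunc.X)⁻¹ +
            algebraMap (RatFunc K) (AdjoinRoot ψF) (k (a (α ^ 2))))
          = (TL * z)⁻¹ * (1 + (eL α + e2L α * TL) * z) := by
        intro α
        have := hfac α
        exact this
      rw [Finset.prod_congr rfl fun α _ => hstep α, Finset.prod_mul_distrib, Finset.prod_const,
        Finset.card_univ, hF, hP]
      have hfinal : ((TL * z)⁻¹) ^ (2 ^ e) * (cL * z ^ (2 ^ e) * TL⁻¹)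
          = cL * (TL⁻¹) ^ (2 ^ e + 1) := by
        have hzz : z⁻¹ ^ (2 ^ e) * z ^ (2 ^ e) = 1 := by
          rw [inv_pow, inv_mul_cancel₀ (pow_ne_zero _ hz0)]
        linear_combination cL * (TL⁻¹) ^ (2 ^ e) * TL⁻¹ * hzz
      rw [hfinal]
      exact CharTwo.add_self_eq_zero _
    -- degrees
    have hmonφ' : (φ.map (σ : RatFunc K →+* RatFunc K)).Monic := hmonφ.map _
    have hdegφ' : (φ.map (σ : RatFunc K →+* RatFunc K)).natDegree = 2 ^ e := by
      rw [natDegree_map_eq_of_injective σ.injective, hdegφ]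
    have hψ0 : ψF ≠ 0 := hirrψ.ne_zero
    haveI : Module.Finite (RatFunc K) (AdjoinRoot ψF) := (AdjoinRoot.powerBasis hψ0).finite
    have hfin : Module.finrank (RatFunc K) (AdjoinRoot ψF) = 2 ^ e := by
      rw [(AdjoinRoot.powerBasis hψ0).finrank]
      exact hdegψ
    have hξint : IsIntegral (RatFunc K) ξ := IsIntegral.of_finite (RatFunc K) ξ
    have hzint : IsIntegral (RatFunc K) z := IsIntegral.of_finite (RatFunc K) z
    have hzξ : z = ξ⁻¹ * TL⁻¹ := by
      rw [hξdef, inv_inv]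
      field_simp
    have htop : IntermediateField.adjoin (RatFunc K) {ξ} = ⊤ := by
      have hzt : IntermediateField.adjoin (RatFunc K) {z} = ⊤ := by
        apply IntermediateField.toSubalgebra_injective
        rw [IntermediateField.top_toSubalgebra]
        refine top_unique ?_
        rw [← AdjoinRoot.adjoinRoot_eq_top (f := ψF)]
        apply Algebra.adjoin_le
        intro w hw
        rw [Set.mem_singleton_iff] at hw
        subst hw
        exact IntermediateField.mem_adjoin_simple_self (RatFunc K) z
      rw [eq_top_iff, ← hzt, IntermediateField.adjoin_simple_le_iff, hzξ]
      exact mul_mem (inv_mem (IntermediateField.mem_adjoin_simple_self (RatFunc K) ξ))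
        (inv_mem ((IntermediateField.adjoin (RatFunc K) {ξ}).algebraMap_mem RatFunc.X))
    have hmindeg : (minpoly (RatFunc K) ξ).natDegree = 2 ^ e := by
      have h1 := IntermediateField.adjoin.finrank hξint
      rw [htop] at h1
      rw [← h1, ← hfin]
      exact LinearEquiv.finrank_eq
        (IntermediateField.topEquiv (F := RatFunc K) (E := AdjoinRoot ψF)).toLinearEquiv
    have hmdvd : minpoly (RatFunc K) ξ ∣ φ.map (σ : RatFunc K →+* RatFunc K) :=
      minpoly.dvd (RatFunc K) ξ haevalξ
    have heq : minpoly (RatFunc K) ξ = φ.map (σ : RatFunc K →+* RatFunc K) :=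
      monic_dvd_eq_aux (minpoly.monic hξint) hmonφ' hmdvd (by rw [hdegφ', hmindeg])
    have hirr' : Irreducible (φ.map (σ : RatFunc K →+* RatFunc K)) :=
      heq ▸ minpoly.irreducible hξint
    have := (MulEquiv.irreducible_iff (Polynomial.mapEquiv σ)).mp
      (by rwa [Polynomial.mapEquiv_apply])
    exact this
  refine ⟨hirrφ, hdegφ, ?_⟩
  letI : Fact (Irreducible φ) := ⟨hirrφ⟩
  show IsGalois (RatFunc K) (AdjoinRoot φ)
  haveI : CharP (AdjoinRoot φ) 2 :=
    charP_of_injective_algebraMap (algebraMap (RatFunc K) (AdjoinRoot φ)).injective 2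
  set x0 : AdjoinRoot φ := AdjoinRoot.root φ with hx0
  set r : Fq → AdjoinRoot φ :=
    fun β => x0 + algebraMap (RatFunc K) (AdjoinRoot φ) (lF β) with hrdef
  have haev0 : Polynomial.aeval x0 φ = 0 := by
    rw [aeval_def, AdjoinRoot.algebraMap_eq]
    exact AdjoinRoot.eval₂_root φ
  have heval0 : (φ.map (algebraMap (RatFunc K) (AdjoinRoot φ))).eval x0 = 0 := by
    rw [eval_map, ← aeval_def]
    exact haev0
  have hrinj : Function.Injective r := by
    intro β γ h
    simp only [hrdef] at h
    exact hlinj ((algebraMap (RatFunc K) (AdjoinRoot φ)).injective (add_left_cancel h))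
  have hroots : ∀ β : Fq,
      (φ.map (algebraMap (RatFunc K) (AdjoinRoot φ))).eval (r β) = 0 := by
    intro β
    have hc := congrArg (Polynomial.map (algebraMap (RatFunc K) (AdjoinRoot φ))) (hcomp β)
    rw [Polynomial.map_comp] at hc
    have h2 := congrArg (Polynomial.eval x0) hc
    rw [Polynomial.eval_comp] at h2
    rw [heval0] at h2
    simp only [Polynomial.map_add, Polynomial.map_X, Polynomial.map_C, eval_add, eval_X,
      eval_C] at h2
    simpa [hrdef] using h2
  have hMdvd : (∏ β : Fq, (X - C (r β))) ∣ φ.map (algebraMap (RatFunc K) (AdjoinRoot φ)) := by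
    apply Finset.prod_dvd_of_coprime
    · exact (Polynomial.pairwise_coprime_X_sub_C hrinj).set_pairwise _
    · intro β _
      exact dvd_iff_isRoot.mpr (hroots β)
  have hMmon : (∏ β : Fq, (X - C (r β))).Monic :=
    monic_prod_of_monic _ _ fun β _ => monic_X_sub_C _
  have hmapdeg : (φ.map (algebraMap (RatFunc K) (AdjoinRoot φ))).natDegree = 2 ^ e := by
    rw [natDegree_map_eq_of_injective (algebraMap (RatFunc K) (AdjoinRoot φ)).injective, hdegφ]
  have hMdeg : (∏ β : Fq, (X - C (r β))).natDegree = 2 ^ e := by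
    rw [natDegree_prod _ _ fun β _ => (monic_X_sub_C (r β)).ne_zero]
    simp [natDegree_X_sub_C, Finset.card_univ, hF]
  have hprodd : ∏ β : Fq, (X - C (r β)) = φ.map (algebraMap (RatFunc K) (AdjoinRoot φ)) :=
    monic_dvd_eq_aux hMmon (hmonφ.map _) hMdvd (by rw [hmapdeg, hMdeg])
  have hsep : φ.Separable := by
    rw [← separable_map (algebraMap (RatFunc K) (AdjoinRoot φ)), ← hprodd]
    exact separable_prod_X_sub_C_iff.mpr hrinj
  have hsplits : Polynomial.Splits (φ.map (algebraMap (RatFunc K) (AdjoinRoot φ))) := by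
    rw [← hprodd]
    exact Polynomial.Splits.prod fun β _ => Polynomial.Splits.X_sub_C _
  haveI hsf : IsSplittingField (RatFunc K) (AdjoinRoot φ) φ := by
    constructor
    · exact hsplits
    · rw [eq_top_iff, ← AdjoinRoot.adjoinRoot_eq_top (f := φ)]
      apply Algebra.adjoin_le
      intro w hw
      rw [Set.mem_singleton_iff] at hw
      subst hw
      apply Algebra.subset_adjoin
      rw [Polynomial.mem_rootSet]
      exact ⟨hmonφ.ne_zero, haev0⟩
  exact IsGalois.of_separable_splitting_field hsep
end
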